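/- Suppose real-valued random variables G_0, G_1, ... satisfy that the conditional distribution of G_i given G_0,...,G_{i−1} stochastically dominates the law of P_i, where P_0, P_1, ... are independent random variables. Then for every j ≥ 0, the sum G_0 + ... + G_j stochastically dominates the sum P_0 + ... + P_j. -/

import Mathlib

open MeasureTheory ProbabilityTheory Set

/-- Auxiliary swap identity: `∫⁻ ω, ν {x | t - T ω ≤ x} ∂μ = ∫⁻ x, μ {ω | t - x ≤ T ω} ∂ν`. -/
lemma lintegral_surv_swap {Ω : Type*} [MeasurableSpace Ω] (μ : Measure Ω) [IsFiniteMeasure μ]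
    (ν : Measure ℝ) [IsFiniteMeasure ν] {T : Ω → ℝ} (hT : Measurable T) (t : ℝ) :
    ∫⁻ ω, ν {x | t - T ω ≤ x} ∂μ = ∫⁻ x, μ {ω | t - x ≤ T ω} ∂ν := by
  have hA : MeasurableSet {q : Ω × ℝ | t ≤ T q.1 + q.2} :=
    measurableSet_le measurable_const ((hT.comp measurable_fst).add measurable_snd)
  calc ∫⁻ ω, ν {x | t - T ω ≤ x} ∂μ
      = ∫⁻ ω, ν (Prod.mk ω ⁻¹' {q : Ω × ℝ | t ≤ T q.1 + q.2}) ∂μ := by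
        refine lintegral_congr fun ω => ?_
        congr 1
        ext x
        simp [sub_le_iff_le_add', add_comm]
    _ = (μ.prod ν) {q : Ω × ℝ | t ≤ T q.1 + q.2} := (Measure.prod_apply hA).symm
    _ = ∫⁻ x, μ ((fun ω => (ω, x)) ⁻¹' {q : Ω × ℝ | t ≤ T q.1 + q.2}) ∂ν :=
        Measure.prod_apply_symm hA
    _ = ∫⁻ x, μ {ω | t - x ≤ T ω} ∂ν := by
        refine lintegral_congr fun x => ?_
        congr 1
        ext ω
        simp [sub_le_iff_le_add]

/-- If real random variables `G 0, G 1, …` are such that the conditional law of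
`G i` given `G 0, …, G (i-1)` stochastically dominates the law of `P i`, where the `P i` are
mutually independent, then `G 0 + ⋯ + G j` stochastically dominates `P 0 + ⋯ + P j` for every
`j`. -/
theorem sum_stoch_dom_of_cond_stoch_dom
    {Ω : Type*} [MeasureSpace Ω] [IsProbabilityMeasure (ℙ : Measure Ω)]
    (G : ℕ → Ω → ℝ) (P : ℕ → Ω → ℝ)
    (hG : ∀ i, Measurable (G i)) (hP : ∀ i, Measurable (P i))
    (hPindep : iIndepFun P ℙ)
    (hdom : ∀ i : ℕ, ∀ t : ℝ, ∀ᵐ ω ∂(ℙ : Measure Ω),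
      ((ℙ : Measure Ω) {ω' | P i ω' ≥ t}).toReal
        ≤ ((ℙ : Measure Ω)⟦{ω' | G i ω' ≥ t} |
            MeasurableSpace.comap (fun ω' (k : Fin i) => G k ω') inferInstance⟧) ω) :
    ∀ j : ℕ, ∀ t : ℝ,
      (ℙ : Measure Ω) {ω | t ≤ ∑ i ∈ Finset.range (j + 1), P i ω}
        ≤ (ℙ : Measure Ω) {ω | t ≤ ∑ i ∈ Finset.range (j + 1), G i ω} := by
  set μ : Measure Ω := ℙ with hμ
  have key : ∀ j : ℕ, ∀ t : ℝ,
      μ {ω | t ≤ ∑ i ∈ Finset.range j, P i ω} ≤ μ {ω | t ≤ ∑ i ∈ Finset.range j, G i ω} := by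
    intro j
    induction j with
    | zero => intro t; simp
    | succ j ih =>
      intro t
      set T : Ω → ℝ := fun ω => ∑ i ∈ Finset.range j, P i ω with hT_def
      set S : Ω → ℝ := fun ω => ∑ i ∈ Finset.range j, G i ω with hS_def
      have hTm : Measurable T := Finset.measurable_sum _ fun i _ => hP i
      have hSm : Measurable S := Finset.measurable_sum _ fun i _ => hG i
      set ν : Measure ℝ := μ.map (P j) with hν_def
      haveI : IsProbabilityMeasure ν := Measure.isProbabilityMeasure_map (hP j).aemeasurable
      set V : Ω → (Fin j → ℝ) := fun ω k => G k ω with hV_def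
      have hVm : Measurable V := measurable_pi_lambda _ fun k => hG k
      set κ := condDistrib (G j) V μ with hκ_def
      -- rewrite the sums
      have hsumP : {ω | t ≤ ∑ i ∈ Finset.range (j + 1), P i ω}
          = {ω | t ≤ T ω + P j ω} := by
        ext ω; simp [hT_def, Finset.sum_range_succ]
      have hsumG : {ω | t ≤ ∑ i ∈ Finset.range (j + 1), G i ω}
          = {ω | t ≤ S ω + G j ω} := by
        ext ω; simp [hS_def, Finset.sum_range_succ]
      have hB : MeasurableSet {q : ℝ × ℝ | t ≤ q.1 + q.2} :=
        measurableSet_le measurable_const (measurable_fst.add measurable_snd)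
      -- independence side
      have hInd : IndepFun T (P j) μ := by
        have h := hPindep.indepFun_sum_range_succ hP j
        have : (∑ i ∈ Finset.range j, P i) = T := by
          ext ω; simp [hT_def]
        rwa [this] at h
      have hmapP : μ.map (fun ω => (T ω, P j ω)) = (μ.map T).prod ν :=
        (indepFun_iff_map_prod_eq_prod_map_map hTm.aemeasurable (hP j).aemeasurable).mp hInd
      have hLHS : μ {ω | t ≤ ∑ i ∈ Finset.range (j + 1), P i ω}
          = ∫⁻ x, μ {ω | t - x ≤ T ω} ∂ν := by
        rw [hsumP]
        have h1 : μ {ω | t ≤ T ω + P j ω}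
            = μ.map (fun ω => (T ω, P j ω)) {q : ℝ × ℝ | t ≤ q.1 + q.2} := by
          rw [Measure.map_apply (hTm.prodMk (hP j)) hB]
          rfl
        rw [h1, hmapP, Measure.prod_apply_symm hB]
        refine lintegral_congr fun x => ?_
        have hpre : ((fun y : ℝ => (y, x)) ⁻¹' {q : ℝ × ℝ | t ≤ q.1 + q.2})
            = Ici (t - x) := by
          ext y; simp [sub_le_iff_le_add]
        rw [hpre, Measure.map_apply hTm measurableSet_Ici]
        rfl
      -- conditional distribution side
      haveI : IsProbabilityMeasure (μ.map fun ω => (V ω, G j ω)) :=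
        Measure.isProbabilityMeasure_map ((hVm.prodMk (hG j)).aemeasurable)
      have hcomp : μ.map (fun ω => (V ω, G j ω)) = (μ.map V) ⊗ₘ κ := by
        rw [hκ_def, condDistrib, ← Measure.fst_map_prodMk (X := V) (hG j),
          Measure.disintegrate _ _]
      have hA : MeasurableSet {q : (Fin j → ℝ) × ℝ | t ≤ (∑ k, q.1 k) + q.2} := by
        refine measurableSet_le measurable_const (Measurable.add ?_ measurable_snd)
        exact Finset.measurable_sum _ fun k _ => (measurable_pi_apply k).comp measurable_fst
      have hSV : ∀ ω, S ω = ∑ k, V ω k := by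
        intro ω
        rw [hS_def, hV_def]
        exact (Fin.sum_univ_eq_sum_range (fun i => G i ω) j).symm
      have hRHS : μ {ω | t ≤ ∑ i ∈ Finset.range (j + 1), G i ω}
          = ∫⁻ ω, κ (V ω) {x | t - S ω ≤ x} ∂μ := by
        rw [hsumG]
        have h1 : μ {ω | t ≤ S ω + G j ω}
            = μ.map (fun ω => (V ω, G j ω)) {q : (Fin j → ℝ) × ℝ | t ≤ (∑ k, q.1 k) + q.2} := by
          rw [Measure.map_apply (hVm.prodMk (hG j)) hA]
          congr 1
          ext ω
          simp [hSV ω]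
        rw [h1, hcomp, Measure.compProd_apply hA,
          lintegral_map (Kernel.measurable_kernel_prodMk_left hA) hVm]
        refine lintegral_congr fun ω => ?_
        congr 1
        ext x
        simp [hSV ω, sub_le_iff_le_add', add_comm]
      -- the domination, for all real thresholds at once
      have hdomQ : ∀ᵐ ω ∂μ, ∀ q : ℚ, ν (Ici (q : ℝ)) ≤ κ (V ω) (Ici (q : ℝ)) := by
        rw [ae_all_iff]
        intro q
        have h2 := condDistrib_ae_eq_condExp (μ := μ) hVm (hG j)
          (measurableSet_Ici (a := (q : ℝ)))
        filter_upwards [hdom j q, h2] with ω h1 h2'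
        have hset : (G j) ⁻¹' Ici ((q : ℝ)) = {ω' | G j ω' ≥ (q : ℝ)} := rfl
        rw [hset] at h2'
        have h3 : ((μ {ω' | P j ω' ≥ (q : ℝ)}).toReal) ≤ (κ (V ω) (Ici (q : ℝ))).toReal := by
          rw [measureReal_def] at h2'; rw [h2']; exact h1
        have h4 : μ {ω' | P j ω' ≥ (q : ℝ)} ≤ κ (V ω) (Ici (q : ℝ)) :=
          (ENNReal.toReal_le_toReal (measure_ne_top _ _) (measure_ne_top _ _)).mp h3
        have h5 : ν (Ici ((q : ℝ))) = μ {ω' | P j ω' ≥ (q : ℝ)} := by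
          rw [hν_def, Measure.map_apply (hP j) measurableSet_Ici]
          rfl
        rw [h5]; exact h4
      have hdomR : ∀ᵐ ω ∂μ, ∀ r : ℝ, ν (Ici r) ≤ κ (V ω) (Ici r) := by
        filter_upwards [hdomQ] with ω hω r
        obtain ⟨q₀, hq₀⟩ := exists_rat_lt r
        have hIci : Ici r = ⋂ q : {q : ℚ // (q : ℝ) < r}, Ici ((q : ℚ) : ℝ) := by
          ext x
          simp only [mem_Ici, mem_iInter]
          constructor
          · intro h q; exact le_trans q.2.le h
          · intro h
            by_contra hlt
            push_neg at hlt
            obtain ⟨q, hq1, hq2⟩ := exists_rat_btwn hlt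
            exact absurd (h ⟨q, hq2⟩) (not_le.mpr hq1)
        have hdir : Directed (· ⊇ ·)
            (fun q : {q : ℚ // (q : ℝ) < r} => Ici (((q : ℚ) : ℝ))) := by
          intro a b
          rcases le_total (a : ℚ) (b : ℚ) with h | h
          · exact ⟨b, Ici_subset_Ici.mpr (by exact_mod_cast h), subset_rfl⟩
          · exact ⟨a, subset_rfl, Ici_subset_Ici.mpr (by exact_mod_cast h)⟩
        haveI : Nonempty {q : ℚ // (q : ℝ) < r} := ⟨⟨q₀, hq₀⟩⟩
        have hk : κ (V ω) (Ici r)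
            = ⨅ q : {q : ℚ // (q : ℝ) < r}, κ (V ω) (Ici (((q : ℚ) : ℝ))) := by
          rw [hIci]
          exact hdir.measure_iInter (fun q => measurableSet_Ici.nullMeasurableSet)
            ⟨⟨q₀, hq₀⟩, measure_ne_top _ _⟩
        rw [hk]
        refine le_iInf fun q => le_trans ?_ (hω q)
        exact measure_mono fun x hx => le_trans q.2.le hx
      -- put everything together
      rw [hLHS, hRHS]
      calc ∫⁻ x, μ {ω | t - x ≤ T ω} ∂ν
          ≤ ∫⁻ x, μ {ω | t - x ≤ S ω} ∂ν := lintegral_mono fun x => ih (t - x)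
        _ = ∫⁻ ω, ν {x | t - S ω ≤ x} ∂μ := (lintegral_surv_swap μ ν hSm t).symm
        _ ≤ ∫⁻ ω, κ (V ω) {x | t - S ω ≤ x} ∂μ := by
            refine lintegral_mono_ae ?_
            filter_upwards [hdomR] with ω hω
            exact hω (t - S ω)
  intro j t
  exact key (j + 1) t
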